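/- (Linearized power sharing formula) Let B be the susceptance matrix of a connected weighted graph partitioned into loads and inverters, K_I diagonal with strictly negative entries, E_N > 0, and Q_L ∈ ℝ^n. Define the approximate load voltages E_L := E_N(1_n − (1/E_N²)B_red^{−1}Q_L) and the inverter voltages E_I := (B_II + K_I)^{−1}(−B_IL E_L + K_I·E_N 1_m). Then E_I = E_N 1_m + (1/E_N)(B_II+K_I)^{−1}B_IL B_red^{−1}Q_L, and consequently the linearized inverter reactive power injections Q_I := E_N·K_I(E_I − E_N 1_m) satisfy Q_I = K_I(B_II + K_I)^{−1}B_IL B_red^{−1}Q_L. -/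

import Mathlib

open Matrix

def suscGraph {V : Type*} (B : Matrix V V ℝ) : SimpleGraph V where
  Adj i j := i ≠ j ∧ 0 < B i j ∧ 0 < B j i
  symm := ⟨fun _ _ h => ⟨h.1.symm, h.2.2, h.2.1⟩⟩
  loopless := ⟨fun _ h => h.1 rfl⟩

def IsSusceptance {V : Type*} [Fintype V] [DecidableEq V] (B : Matrix V V ℝ) : Prop :=
  B.IsSymm ∧ (∀ i j, i ≠ j → 0 ≤ B i j) ∧
    (∀ i, B i i = -∑ j ∈ Finset.univ.erase i, B i j) ∧ (suscGraph B).Connected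

/-- Linearized power sharing formula: with the approximate load
voltages `E_L = E_N(1 - (1/E_N²) B_red⁻¹ Q_L)` and the recovered inverter voltages
`E_I = (B_II+K_I)⁻¹(-B_IL E_L + K_I E_N 1)`, one has
`E_I = E_N 1 + (1/E_N)(B_II+K_I)⁻¹ B_IL B_red⁻¹ Q_L` and the linearized injections
`Q_I = E_N K_I (E_I - E_N 1)` satisfy `Q_I = K_I (B_II+K_I)⁻¹ B_IL B_red⁻¹ Q_L`. -/
theorem linearized_power_sharing {n m : ℕ} (hn : 0 < n) (hm : 0 < m)
    (B : Matrix (Fin n ⊕ Fin m) (Fin n ⊕ Fin m) ℝ) (hB : IsSusceptance B)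
    (k : Fin m → ℝ) (hk : ∀ i, k i < 0)
    (EN : ℝ) (hEN : 0 < EN) (QL : Fin n → ℝ)
    (hinv1 : IsUnit (B.toBlocks₂₂ + Matrix.diagonal k).det)
    (Bred : Matrix (Fin n) (Fin n) ℝ)
    (hBred : Bred = B.toBlocks₁₁ -
      B.toBlocks₁₂ * (B.toBlocks₂₂ + Matrix.diagonal k)⁻¹ * B.toBlocks₂₁)
    (hinv2 : IsUnit Bred.det) :
    let EL : Fin n → ℝ := fun i => EN * (1 - (1 / EN ^ 2) * Bred⁻¹.mulVec QL i)
    let EI : Fin m → ℝ := (B.toBlocks₂₂ + Matrix.diagonal k)⁻¹.mulVec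
      (-(B.toBlocks₂₁.mulVec EL) +
        (Matrix.diagonal k).mulVec (Function.const (Fin m) EN))
    (EI = Function.const (Fin m) EN + (1 / EN) •
        ((B.toBlocks₂₂ + Matrix.diagonal k)⁻¹ * B.toBlocks₂₁ * Bred⁻¹).mulVec QL) ∧
    (EN • (Matrix.diagonal k).mulVec (EI - Function.const (Fin m) EN) =
      (Matrix.diagonal k * (B.toBlocks₂₂ + Matrix.diagonal k)⁻¹ * B.toBlocks₂₁ *
        Bred⁻¹).mulVec QL) := by
  intro EL EI
  set A := B.toBlocks₂₂ + Matrix.diagonal k with hA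
  have hAinv : A * A⁻¹ = 1 := mul_nonsing_inv _ hinv1
  have hAinv' : A⁻¹ * A = 1 := nonsing_inv_mul _ hinv1
  -- row sums of B vanish
  have hrow : ∀ i : Fin m,
      B.toBlocks₂₁.mulVec (Function.const (Fin n) EN) i +
      B.toBlocks₂₂.mulVec (Function.const (Fin m) EN) i = 0 := by
    intro i
    have h0 : ∑ j, B (Sum.inr i) j = 0 := by
      rw [← Finset.add_sum_erase _ _ (Finset.mem_univ (Sum.inr i)), hB.2.2.1 (Sum.inr i)]
      ring
    rw [Fintype.sum_sum_type] at h0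
    simp only [mulVec, dotProduct, toBlocks₂₁, toBlocks₂₂, of_apply, Function.const_apply]
    rw [← Finset.sum_mul, ← Finset.sum_mul, ← add_mul]
    rw [h0, zero_mul]
  have hrowv : B.toBlocks₂₁.mulVec (Function.const (Fin n) EN) +
      B.toBlocks₂₂.mulVec (Function.const (Fin m) EN) = 0 := funext hrow
  have hEL : EL = Function.const (Fin n) EN - (1 / EN) • Bred⁻¹.mulVec QL := by
    funext i
    simp only [EL, Pi.sub_apply, Pi.smul_apply, Function.const_apply, smul_eq_mul]
    field_simp
  set tgt : Fin m → ℝ := Function.const (Fin m) EN +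
      (1 / EN) • (A⁻¹ * B.toBlocks₂₁ * Bred⁻¹).mulVec QL with htgt
  have hkey : -(B.toBlocks₂₁.mulVec EL) +
      (Matrix.diagonal k).mulVec (Function.const (Fin m) EN) = A.mulVec tgt := by
    have hprod : A * (A⁻¹ * B.toBlocks₂₁ * Bred⁻¹) = B.toBlocks₂₁ * Bred⁻¹ := by
      rw [← Matrix.mul_assoc, ← Matrix.mul_assoc, hAinv, Matrix.one_mul]
    rw [htgt, hEL, mulVec_add, mulVec_smul, mulVec_mulVec, hprod,
      mulVec_sub, mulVec_smul, mulVec_mulVec, hA, add_mulVec]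
    funext j
    have hj := congrFun hrowv j
    simp only [Pi.add_apply, Pi.neg_apply, Pi.sub_apply, Pi.smul_apply, Pi.zero_apply] at *
    linarith
  have h1 : EI = tgt := by
    show A⁻¹.mulVec _ = tgt
    rw [hkey, mulVec_mulVec, hAinv', one_mulVec]
  refine ⟨h1, ?_⟩
  rw [h1, htgt, add_sub_cancel_left, mulVec_smul, smul_smul, mul_one_div,
    div_self hEN.ne', one_smul, mulVec_mulVec]
  simp [Matrix.mul_assoc]
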